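/- (Scheme 4 conserves momentum and internal energy.) Let V be a real vector space, Δt ≥ 0, S₀₁, S₁₀ ≥ 0, and let η₀, η₁ > 0 be real numbers with φ₀, φ₁ ∈ V. Define λᵢⱼ = Δt·Sᵢⱼ/(1 + Δt·(S₀₁+S₁₀)) and the implicit mass update η₀' = (1−λ₀₁)·η₀ + λ₁₀·η₁ and η₁' = (1−λ₁₀)·η₁ + λ₀₁·η₀. Let D = 1 + Δt·(S₁₀·η₁'/η₀ + S₀₁·η₀'/η₁) and define φ₀' = (1−ν₁₀)·φ₀ + ν₁₀·φ₁ and φ₁' = (1−ν₀₁)·φ₁ + ν₀₁·φ₀ with ν₁₀ = (Δt·S₁₀·η₁'/η₀)/D and ν₀₁ = (Δt·S₀₁·η₀'/η₁)/D. Then η₀'·φ₀' + η₁'·φ₁' = η₀·φ₀ + η₁·φ₁. -/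

import Mathlib

/-- Scheme 4 (α_C = 1, α_A = 1, q = n+1, r = m) conserves momentum and
internal energy: the total η·φ is unchanged by the transfer. -/
theorem scheme4_conserves
    {V : Type*} [AddCommGroup V] [Module ℝ V]
    (Δt S01 S10 η0 η1 : ℝ) (φ0 φ1 : V)
    (hΔt : 0 ≤ Δt) (hS01 : 0 ≤ S01) (hS10 : 0 ≤ S10)
    (hη0 : 0 < η0) (hη1 : 0 < η1)
    (lam01 lam10 : ℝ)
    (hlam01 : lam01 = Δt * S01 / (1 + Δt * (S01 + S10)))
    (hlam10 : lam10 = Δt * S10 / (1 + Δt * (S01 + S10)))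
    (η0' η1' : ℝ)
    (hη0' : η0' = (1 - lam01) * η0 + lam10 * η1)
    (hη1' : η1' = (1 - lam10) * η1 + lam01 * η0)
    (D : ℝ)
    (hD : D = 1 + Δt * (S10 * η1' / η0 + S01 * η0' / η1))
    (ν10 ν01 : ℝ)
    (hν10 : ν10 = (Δt * S10 * η1' / η0) / D)
    (hν01 : ν01 = (Δt * S01 * η0' / η1) / D)
    (φ0' φ1' : V)
    (hφ0' : φ0' = (1 - ν10) • φ0 + ν10 • φ1)
    (hφ1' : φ1' = (1 - ν01) • φ1 + ν01 • φ0) :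
    η0' • φ0' + η1' • φ1' = η0 • φ0 + η1 • φ1 := by
  have hη00 : η0 ≠ 0 := ne_of_gt hη0
  have hη10 : η1 ≠ 0 := ne_of_gt hη1
  have hE : (0:ℝ) < 1 + Δt * (S01 + S10) := by positivity
  have hE' : (1 + Δt * (S01 + S10)) ≠ 0 := ne_of_gt hE
  have hη0'pos : 0 ≤ η0' := by
    rw [hη0', hlam01, hlam10]
    have h1 : Δt * S01 / (1 + Δt * (S01 + S10)) ≤ 1 := by
      rw [div_le_one hE]; nlinarith [mul_nonneg hΔt hS10]
    have h2 : 0 ≤ Δt * S10 / (1 + Δt * (S01 + S10)) := by positivity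
    nlinarith
  have hη1'pos : 0 ≤ η1' := by
    rw [hη1', hlam01, hlam10]
    have h1 : Δt * S10 / (1 + Δt * (S01 + S10)) ≤ 1 := by
      rw [div_le_one hE]; nlinarith [mul_nonneg hΔt hS01]
    have h2 : 0 ≤ Δt * S01 / (1 + Δt * (S01 + S10)) := by positivity
    nlinarith
  have hDpos : 0 < D := by
    rw [hD]
    have : 0 ≤ Δt * (S10 * η1' / η0 + S01 * η0' / η1) := by positivity
    linarith
  have hD0 : D ≠ 0 := ne_of_gt hDpos
  have hA : η0' + η1' = η0 + η1 := by rw [hη0', hη1']; ring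
  have hB : η0' * (1 + Δt * S01) - Δt * S10 * η1' = η0 := by
    rw [hη0', hη1', hlam01, hlam10]; field_simp; ring
  have hC : η1' * (1 + Δt * S10) - Δt * S01 * η0' = η1 := by
    rw [hη0', hη1', hlam01, hlam10]; field_simp; ring
  have hν10' : ν10 * D = Δt * S10 * η1' / η0 := by rw [hν10]; field_simp
  have hν01' : ν01 * D = Δt * S01 * η0' / η1 := by rw [hν01]; field_simp
  have h0 : η0' * (1 - ν10) + η1' * ν01 = η0 := by
    apply mul_right_cancel₀ hD0
    have expand : (η0' * (1 - ν10) + η1' * ν01) * D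
        = η0' * D - η0' * (ν10 * D) + η1' * (ν01 * D) := by ring
    rw [expand, hν10', hν01', hD]
    field_simp
    linear_combination ((Δt * S01 * η0' * η0) * hA + (η0 * η1) * hB)
  have h1 : η0' * ν10 + η1' * (1 - ν01) = η1 := by
    apply mul_right_cancel₀ hD0
    have expand : (η0' * ν10 + η1' * (1 - ν01)) * D
        = η0' * (ν10 * D) + η1' * D - η1' * (ν01 * D) := by ring
    rw [expand, hν10', hν01', hD]
    field_simp
    linear_combination ((Δt * S10 * η1' * η1) * hA + (η0 * η1) * hC)
  calc η0' • φ0' + η1' • φ1'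
      = (η0' * (1 - ν10) + η1' * ν01) • φ0 + (η0' * ν10 + η1' * (1 - ν01)) • φ1 := by
        rw [hφ0', hφ1']
        simp only [smul_add, smul_smul, add_smul]
        abel
    _ = η0 • φ0 + η1 • φ1 := by rw [h0, h1]
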